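/- Let c > 0, Δ > 0, M ≥ 1, and θ > Δ. Consider a probability space carrying a random bit S uniform on {0, 1} and random variables Z_1, …, Z_M such that S, Z_1, …, Z_M are mutually independent and each Z_m has law ν_c (the Lévy distribution with scale c). Set X = Δ·S and Y_m = X + Z_m, and define the first-arrival detector Ŝ_FA = 1 if min_{m} Y_m ≥ θ and Ŝ_FA = 0 otherwise. Then the error probability satisfies P(Ŝ_FA ≠ S) = (1/2)·[ (1 − erfc(√(c/(2θ))))^M + 1 − (1 − erfc(√(c/(2(θ − Δ)))))^M ]. -/

import Mathlib

open MeasureTheory ProbabilityTheory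

/-- The Lévy density with location 0 and scale `c`. -/
noncomputable def levyDensity (c z : ℝ) : ℝ :=
  if 0 < z then Real.sqrt (c / (2 * Real.pi * z ^ 3)) * Real.exp (-c / (2 * z)) else 0

/-- The Lévy distribution with location 0 and scale `c`, as a measure on `ℝ`. -/
noncomputable def levyMeasure (c : ℝ) : Measure ℝ :=
  volume.withDensity fun z => ENNReal.ofReal (levyDensity c z)

/-- The complementary error function `erfc x = (2/√π) ∫_x^∞ exp(−u²) du`. -/
noncomputable def erfc (x : ℝ) : ℝ :=
  (2 / Real.sqrt Real.pi) * ∫ u in Set.Ioi x, Real.exp (-u ^ 2)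

lemma gauss_int : Integrable (fun u : ℝ => Real.exp (-u ^ 2)) := by
  simpa using integrable_exp_neg_mul_sq one_pos

lemma hasDerivAt_erfc (x : ℝ) :
    HasDerivAt erfc (-(2 / Real.sqrt Real.pi * Real.exp (-x ^ 2))) x := by
  have hg := gauss_int
  have heq : ∀ y : ℝ, erfc y = (2 / Real.sqrt Real.pi) *
      ((∫ u, Real.exp (-u ^ 2)) - ((∫ u in Set.Iic (0:ℝ), Real.exp (-u ^ 2))
        + ∫ u in (0:ℝ)..y, Real.exp (-u ^ 2))) := by
    intro y
    have h1 : (∫ u in Set.Iic y, Real.exp (-u ^ 2)) + ∫ u in Set.Ioi y, Real.exp (-u ^ 2)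
        = ∫ u, Real.exp (-u ^ 2) := intervalIntegral.integral_Iic_add_Ioi hg.integrableOn hg.integrableOn
    have h2 : (∫ u in Set.Iic y, Real.exp (-u ^ 2)) - ∫ u in Set.Iic (0:ℝ), Real.exp (-u ^ 2)
        = ∫ u in (0:ℝ)..y, Real.exp (-u ^ 2) :=
      intervalIntegral.integral_Iic_sub_Iic hg.integrableOn hg.integrableOn
    rw [erfc]
    congr 1
    linarith
  have hcont : Continuous fun u : ℝ => Real.exp (-u ^ 2) :=
    Real.continuous_exp.comp (continuous_pow 2).neg
  have hd : HasDerivAt (fun y : ℝ => ∫ u in (0:ℝ)..y, Real.exp (-u ^ 2))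
      (Real.exp (-x ^ 2)) x := by
    refine intervalIntegral.integral_hasDerivAt_right hg.intervalIntegrable ?_ ?_
    · exact hcont.stronglyMeasurable.stronglyMeasurableAtFilter
    · exact hcont.continuousAt
  have hda := ((hd.const_add (∫ u in Set.Iic (0:ℝ), Real.exp (-u ^ 2))).const_sub
      (∫ u, Real.exp (-u ^ 2))).const_mul (2 / Real.sqrt Real.pi)
  have hef : erfc = fun y => (2 / Real.sqrt Real.pi) *
      ((∫ u, Real.exp (-u ^ 2)) - ((∫ u in Set.Iic (0:ℝ), Real.exp (-u ^ 2))
        + ∫ u in (0:ℝ)..y, Real.exp (-u ^ 2))) := funext heq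
  rw [hef]
  refine hda.congr_deriv ?_
  ring

lemma erfc_zero : erfc 0 = 1 := by
  have h : (∫ u in Set.Ioi (0:ℝ), Real.exp (-u ^ 2)) = Real.sqrt Real.pi / 2 := by
    have := integral_gaussian_Ioi 1
    simpa using this
  rw [erfc, h]
  have : Real.sqrt Real.pi ≠ 0 := by positivity
  field_simp

lemma levy_hasDerivAt {c z : ℝ} (hc : 0 < c) (hz : 0 < z) :
    HasDerivAt (fun y => erfc (Real.sqrt (c / (2 * y)))) (levyDensity c z) z := by
  set s := Real.sqrt (c / (2 * z)) with hs
  have hczpos : 0 < c / (2 * z) := by positivity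
  have hspos : 0 < s := Real.sqrt_pos.mpr hczpos
  have hs2 : s ^ 2 = c / (2 * z) := Real.sq_sqrt hczpos.le
  have h1 : HasDerivAt (fun y : ℝ => c / (2 * y)) (-(c / 2 * (z ^ 2)⁻¹)) z := by
    have h := (hasDerivAt_inv hz.ne').const_mul (c / 2)
    have hfun : (fun y : ℝ => c / 2 * y⁻¹) = fun y : ℝ => c / (2 * y) := by
      funext y
      field_simp
    rw [hfun] at h
    refine h.congr_deriv ?_
    ring
  have h2 : HasDerivAt (fun y : ℝ => Real.sqrt (c / (2 * y)))
      (1 / (2 * s) * -(c / 2 * (z ^ 2)⁻¹)) z :=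
    (Real.hasDerivAt_sqrt hczpos.ne').comp z h1
  have h3 := (hasDerivAt_erfc s).comp z h2
  refine h3.congr_deriv (Eq.symm ?_)
  rw [levyDensity, if_pos hz, hs2]
  have hπ : (0:ℝ) < Real.pi := Real.pi_pos
  have hsqπ : Real.sqrt Real.pi ^ 2 = Real.pi := Real.sq_sqrt hπ.le
  have hsqrtπpos : 0 < Real.sqrt Real.pi := Real.sqrt_pos.mpr hπ
  have key : Real.sqrt (c / (2 * Real.pi * z ^ 3))
      = c / (2 * Real.sqrt Real.pi * s * z ^ 2) := by
    have h4 : c / (2 * Real.pi * z ^ 3) = (c / (2 * Real.sqrt Real.pi * s * z ^ 2)) ^ 2 := by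
      rw [div_pow]
      rw [show (2 * Real.sqrt Real.pi * s * z ^ 2) ^ 2
          = 4 * (Real.sqrt Real.pi ^ 2) * (s ^ 2) * z ^ 4 by ring, hsqπ, hs2]
      field_simp
      ring
    rw [h4, Real.sqrt_sq (by positivity)]
  rw [key]
  have : -c / (2 * z) = -(c / (2 * z)) := by ring
  rw [this]
  field_simp

lemma levy_tendsto {c : ℝ} (hc : 0 < c) :
    Filter.Tendsto (fun z => erfc (Real.sqrt (c / (2 * z)))) Filter.atTop (nhds 1) := by
  have h1 : Filter.Tendsto (fun z : ℝ => c / (2 * z)) Filter.atTop (nhds 0) :=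
    Filter.Tendsto.div_atTop tendsto_const_nhds
      (Filter.Tendsto.const_mul_atTop two_pos Filter.tendsto_id)
  have h2 : Filter.Tendsto (fun z : ℝ => Real.sqrt (c / (2 * z))) Filter.atTop (nhds 0) := by
    have := (Real.continuous_sqrt.tendsto 0).comp h1
    simpa [Function.comp_def] using this
  have h3 := ((hasDerivAt_erfc 0).continuousAt.tendsto).comp h2
  simpa [erfc_zero, Function.comp_def] using h3

lemma levy_integral {c t : ℝ} (hc : 0 < c) (ht : 0 < t) :
    ∫ z in Set.Ioi t, levyDensity c z = 1 - erfc (Real.sqrt (c / (2 * t))) := by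
  refine integral_Ioi_of_hasDerivAt_of_nonneg ?_ (fun x hx => levy_hasDerivAt hc (ht.trans hx))
    (fun x hx => ?_) (levy_tendsto hc)
  · exact (levy_hasDerivAt hc ht).continuousAt.continuousWithinAt
  · rw [levyDensity, if_pos (ht.trans hx)]; positivity

lemma levy_integrableOn {c t : ℝ} (hc : 0 < c) (ht : 0 < t) :
    IntegrableOn (levyDensity c) (Set.Ioi t) := by
  refine integrableOn_Ioi_deriv_of_nonneg ?_ (fun x hx => levy_hasDerivAt hc (ht.trans hx))
    (fun x hx => ?_) (levy_tendsto hc)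
  · exact (levy_hasDerivAt hc ht).continuousAt.continuousWithinAt
  · rw [levyDensity, if_pos (ht.trans hx)]; positivity

lemma levyDensity_nonneg (c z : ℝ) : 0 ≤ levyDensity c z := by
  rw [levyDensity]
  split <;> positivity

lemma levyDensity_measurable (c : ℝ) : Measurable (levyDensity c) := by
  unfold levyDensity
  refine Measurable.ite (measurableSet_lt measurable_const measurable_id) ?_ measurable_const
  fun_prop

lemma levyMeasure_Ici {c a : ℝ} (hc : 0 < c) (ha : 0 < a) :
    levyMeasure c (Set.Ici a) = ENNReal.ofReal (1 - erfc (Real.sqrt (c / (2 * a)))) := by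
  have hnull : levyMeasure c {a} = 0 :=
    (withDensity_absolutelyContinuous volume _) (measure_singleton a)
  have hIciIoi : levyMeasure c (Set.Ici a) = levyMeasure c (Set.Ioi a) := by
    refine le_antisymm ?_ (measure_mono Set.Ioi_subset_Ici_self)
    calc levyMeasure c (Set.Ici a) = levyMeasure c ({a} ∪ Set.Ioi a) := by
          rw [show ({a} ∪ Set.Ioi a : Set ℝ) = Set.Ici a by
            ext x; simp [le_iff_lt_or_eq, or_comm, eq_comm]]
      _ ≤ levyMeasure c {a} + levyMeasure c (Set.Ioi a) := measure_union_le _ _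
      _ = levyMeasure c (Set.Ioi a) := by rw [hnull, zero_add]
  rw [hIciIoi, levyMeasure, withDensity_apply _ measurableSet_Ioi,
    ← ofReal_integral_eq_lintegral_ofReal (levy_integrableOn hc ha)
      (Filter.Eventually.of_forall fun z => levyDensity_nonneg c z),
    levy_integral hc ha]


/-- Error probability of the first-arrival detector with threshold `θ > Δ` for the
`M`-particle binary DBMT channel with equiprobable symbols `0` and `Δ`. -/
theorem FA_detector_error_probability (c Δ θ : ℝ) (hc : 0 < c) (hΔ : 0 < Δ) (hθ : Δ < θ)
    (M : ℕ) (hM : 1 ≤ M)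
    {Ω : Type*} [MeasurableSpace Ω] (μ : Measure Ω) [IsProbabilityMeasure μ]
    (S : Ω → ℝ) (Z : Fin M → Ω → ℝ)
    (hSmeas : Measurable S) (hZmeas : ∀ m, Measurable (Z m))
    (hS01 : ∀ ω, S ω = 0 ∨ S ω = 1) (hSunif : μ {ω | S ω = 1} = 1 / 2)
    (hindep : iIndepFun (Fin.cons S Z : Fin (M + 1) → Ω → ℝ) μ)
    (hlaw : ∀ m, μ.map (Z m) = levyMeasure c) :
    μ {ω | (if θ ≤ ⨅ m, (Δ * S ω + Z m ω) then (1 : ℝ) else 0) ≠ S ω}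
      = ENNReal.ofReal ((1 / 2) *
          ((1 - erfc (Real.sqrt (c / (2 * θ)))) ^ M
            + 1 - (1 - erfc (Real.sqrt (c / (2 * (θ - Δ))))) ^ M)) := by
  have hMpos : 0 < M := hM
  have : Nonempty (Fin M) := Fin.pos_iff_nonempty.mp hMpos
  have hθpos : 0 < θ := hΔ.trans hθ
  have hθΔpos : 0 < θ - Δ := sub_pos.mpr hθ
  set p : ℝ := 1 - erfc (Real.sqrt (c / (2 * θ))) with hp
  set q : ℝ := 1 - erfc (Real.sqrt (c / (2 * (θ - Δ)))) with hq
  -- probabilities of single-particle events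
  have hZprob : ∀ (m : Fin M) (a : ℝ), 0 < a →
      μ (Z m ⁻¹' Set.Ici a) = ENNReal.ofReal (1 - erfc (Real.sqrt (c / (2 * a)))) := by
    intro m a ha
    rw [← Measure.map_apply (hZmeas m) measurableSet_Ici, hlaw m, levyMeasure_Ici hc ha]
  -- p, q ∈ [0,1]
  have hlevyProb : IsProbabilityMeasure (levyMeasure c) := by
    rw [← hlaw ⟨0, hMpos⟩]
    exact Measure.isProbabilityMeasure_map (hZmeas _).aemeasurable
  have hbound : ∀ a : ℝ, 0 < a → 0 ≤ 1 - erfc (Real.sqrt (c / (2 * a))) ∧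
      1 - erfc (Real.sqrt (c / (2 * a))) ≤ 1 := by
    intro a ha
    constructor
    · rw [← levy_integral hc ha]
      exact integral_nonneg fun z => levyDensity_nonneg c z
    · have h1 : ENNReal.ofReal (1 - erfc (Real.sqrt (c / (2 * a)))) ≤ 1 := by
        rw [← levyMeasure_Ici hc ha]; exact prob_le_one
      exact ENNReal.ofReal_le_one.mp h1
  obtain ⟨hp0, hp1⟩ := hbound θ hθpos
  obtain ⟨hq0, hq1⟩ := hbound (θ - Δ) hθΔpos
  -- the event sets
  set A0 : Set Ω := S ⁻¹' {0} with hA0def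
  set A1 : Set Ω := S ⁻¹' {1} with hA1def
  set Cθ : Set Ω := ⋂ m, Z m ⁻¹' Set.Ici θ with hCθdef
  set CΔ : Set Ω := ⋂ m, Z m ⁻¹' Set.Ici (θ - Δ) with hCΔdef
  have hA0m : MeasurableSet A0 := hSmeas (measurableSet_singleton 0)
  have hA1m : MeasurableSet A1 := hSmeas (measurableSet_singleton 1)
  have hCθm : MeasurableSet Cθ := MeasurableSet.iInter fun m => hZmeas m measurableSet_Ici
  have hCΔm : MeasurableSet CΔ := MeasurableSet.iInter fun m => hZmeas m measurableSet_Ici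
  -- event decomposition
  have hE : {ω | (if θ ≤ ⨅ m, (Δ * S ω + Z m ω) then (1 : ℝ) else 0) ≠ S ω}
      = (A0 ∩ Cθ) ∪ (A1 ∩ CΔᶜ) := by
    ext ω
    have hbdd : ∀ f : Fin M → ℝ, BddBelow (Set.range f) := fun f =>
      (Set.finite_range f).bddBelow
    rcases hS01 ω with h0 | h1
    · simp only [Set.mem_setOf_eq, Set.mem_union, Set.mem_inter_iff, Set.mem_preimage,
        Set.mem_singleton_iff, Set.mem_compl_iff, Set.mem_iInter, hA0def, hA1def,
        hCθdef, hCΔdef, h0, mul_zero, zero_add]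
      have hiff : (θ ≤ ⨅ m, Z m ω) ↔ ∀ m, θ ≤ Z m ω := le_ciInf_iff (hbdd _)
      by_cases hcond : ∀ m, θ ≤ Z m ω
      · simp [if_pos (hiff.mpr hcond), hcond]
      · simp [if_neg (fun h => hcond (hiff.mp h)), hcond]
    · simp only [Set.mem_setOf_eq, Set.mem_union, Set.mem_inter_iff, Set.mem_preimage,
        Set.mem_singleton_iff, Set.mem_compl_iff, Set.mem_iInter, hA0def, hA1def,
        hCθdef, hCΔdef, h1, mul_one]
      have hiff : (θ ≤ ⨅ m, (Δ + Z m ω)) ↔ ∀ m, θ - Δ ≤ Z m ω := by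
        rw [le_ciInf_iff (hbdd _)]
        constructor
        · intro h m; linarith [h m]
        · intro h m; linarith [h m]
      by_cases hcond : ∀ m, θ - Δ ≤ Z m ω
      · simp [if_pos (hiff.mpr hcond), hcond]
      · simp only [if_neg (fun h => hcond (hiff.mp h)), hcond]
        obtain ⟨m, hm⟩ := not_forall.mp hcond
        simp only [not_le] at hm
        constructor
        · intro _
          exact Or.inr ⟨trivial, fun h => absurd (h m) (not_le.mpr hm)⟩
        · intro _
          norm_num
  rw [hE]
  -- independence product formula
  have hprod : ∀ (B : Set ℝ), MeasurableSet B → ∀ a : ℝ,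
      μ (S ⁻¹' B ∩ ⋂ m, Z m ⁻¹' Set.Ici a)
        = μ (S ⁻¹' B) * ∏ m : Fin M, μ (Z m ⁻¹' Set.Ici a) := by
    intro B hB a
    have hmeas : ∀ i : Fin (M + 1),
        MeasurableSet[MeasurableSpace.comap ((Fin.cons S Z : Fin (M+1) → Ω → ℝ) i)
          inferInstance]
          ((Fin.cons (S ⁻¹' B) (fun m => Z m ⁻¹' Set.Ici a) : Fin (M+1) → Set Ω) i) := by
      intro i
      induction i using Fin.cases with
      | zero => exact ⟨B, hB, by simp⟩
      | succ m => exact ⟨Set.Ici a, measurableSet_Ici, by simp⟩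
    have h := hindep.meas_iInter hmeas
    have hset : (⋂ i, (Fin.cons (S ⁻¹' B) (fun m => Z m ⁻¹' Set.Ici a) : Fin (M+1) → Set Ω) i)
        = S ⁻¹' B ∩ ⋂ m, Z m ⁻¹' Set.Ici a := by
      ext ω
      simp [Set.mem_iInter, Fin.forall_fin_succ]
    rw [hset, Fin.prod_univ_succ] at h
    simpa using h
  -- half probabilities
  have hA1 : μ A1 = 1 / 2 := by
    rw [hA1def, show S ⁻¹' {1} = {ω | S ω = 1} by ext ω; simp]
    exact hSunif
  have hA0 : μ A0 = 1 / 2 := by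
    have hcompl : A0 = A1ᶜ := by
      ext ω
      rcases hS01 ω with h | h <;> simp [hA0def, hA1def, h]
    rw [hcompl, measure_compl hA1m (measure_ne_top μ _), hA1]
    rw [measure_univ]
    norm_num
  -- disjointness and union
  have hdisj : Disjoint (A0 ∩ Cθ) (A1 ∩ CΔᶜ) := by
    refine Set.disjoint_left.mpr fun ω hω1 hω2 => ?_
    have h0 : S ω = 0 := hω1.1
    have h1 : S ω = 1 := hω2.1
    rw [h0] at h1
    norm_num at h1
  rw [measure_union hdisj (hA1m.inter hCΔm.compl)]
  have hPθ : μ (A0 ∩ Cθ) = 1 / 2 * ENNReal.ofReal p ^ M := by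
    rw [hA0def, hCθdef, hprod _ (measurableSet_singleton 0) θ, ← hA0def, hA0]
    congr 1
    rw [Finset.prod_congr rfl (fun m _ => hZprob m θ hθpos), Finset.prod_const,
      Finset.card_univ, Fintype.card_fin]
  have hPΔ : μ (A1 ∩ CΔ) = 1 / 2 * ENNReal.ofReal q ^ M := by
    rw [hA1def, hCΔdef, hprod _ (measurableSet_singleton 1) (θ - Δ), ← hA1def, hA1]
    congr 1
    rw [Finset.prod_congr rfl (fun m _ => hZprob m (θ - Δ) hθΔpos), Finset.prod_const,
      Finset.card_univ, Fintype.card_fin]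
  have hP2 : μ (A1 ∩ CΔᶜ) = 1 / 2 - 1 / 2 * ENNReal.ofReal q ^ M := by
    have hset : A1 ∩ CΔᶜ = A1 \ (A1 ∩ CΔ) := by rw [Set.diff_self_inter, Set.diff_eq]
    rw [hset, measure_diff Set.inter_subset_left (hA1m.inter hCΔm).nullMeasurableSet
      (measure_ne_top μ _), hA1, hPΔ]
  rw [hPθ, hP2]
  -- final ENNReal arithmetic
  have e2 : ENNReal.ofReal (1 / 2 : ℝ) = 1 / 2 := by
    rw [ENNReal.ofReal_div_of_pos two_pos, ENNReal.ofReal_one, ENNReal.ofReal_ofNat]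
  have hqM1 : q ^ M ≤ 1 := pow_le_one₀ hq0 hq1
  have hpM0 : 0 ≤ p ^ M := pow_nonneg hp0 M
  have hqM0 : 0 ≤ q ^ M := pow_nonneg hq0 M
  rw [show (1 / 2 : ℝ) * (p ^ M + 1 - q ^ M) = 1 / 2 * p ^ M + (1 / 2 - 1 / 2 * q ^ M) by ring,
    ENNReal.ofReal_add (mul_nonneg (by norm_num) hpM0) (by linarith),
    ENNReal.ofReal_mul (by norm_num), ENNReal.ofReal_sub _ (mul_nonneg (by norm_num) hqM0),
    ENNReal.ofReal_mul (by norm_num), e2, ENNReal.ofReal_pow hp0, ENNReal.ofReal_pow hq0]
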